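/- Let d ≥ 1 be an integer and g ∈ ℂ^d a unit vector. Then rank(G(g)) ≥ d. -/

import Mathlib

open Complex Finset

noncomputable section

/-- `gw d` is the primitive `d`-th root of unity `ω = exp(2πi/d)`. -/
def gw (d : ℕ) : ℂ := Complex.exp (2 * Real.pi * Complex.I / d)

/-- `modT d k l g = M^k T^ℓ g`, where `(Mg)_n = ω^n g_n` and `(Tg)_n = g_{n-1}`. -/
def modT (d : ℕ) (k l : ZMod d) (g : ZMod d → ℂ) : ZMod d → ℂ :=
  fun n => gw d ^ (k.val * n.val) * g (n - l)

/-- `inn d x y = ⟨x,y⟩ = Σ_n x_n conj(y_n)`. -/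
def inn (d : ℕ) [NeZero d] (x y : ZMod d → ℂ) : ℂ :=
  ∑ n : ZMod d, x n * (starRingEnd ℂ) (y n)

/-- The `d² × d²` Gram matrix `G(g)` with entries `|⟨M^k T^ℓ g, M^{k'} T^{ℓ'} g⟩|²`. -/
def Gmat (d : ℕ) [NeZero d] (g : ZMod d → ℂ) :
    Matrix (ZMod d × ZMod d) (ZMod d × ZMod d) ℂ :=
  fun p q =>
    ((‖inn d (modT d p.1 p.2 g) (modT d q.1 q.2 g)‖ ^ 2 : ℝ) : ℂ)

namespace S5
open Matrix
set_option linter.unusedSectionVars false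
variable (d : ℕ) [NeZero d]

def e (x : ZMod d) : ℂ := gw d ^ x.val

lemma gw_prim : IsPrimitiveRoot (gw d) d := Complex.isPrimitiveRoot_exp d (NeZero.ne d)

lemma gw_pow_d : gw d ^ d = 1 := (gw_prim d).pow_eq_one

lemma gw_pow_mod (n : ℕ) : gw d ^ (n % d) = gw d ^ n := by
  conv_rhs => rw [← Nat.mod_add_div n d]
  rw [pow_add, pow_mul, gw_pow_d, one_pow, mul_one]

lemma e_add (x y : ZMod d) : e d (x + y) = e d x * e d y := by
  rw [e, e, e, ZMod.val_add, gw_pow_mod, pow_add]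

lemma e_zero : e d 0 = 1 := by simp [e]

lemma e_mul_val (x y : ZMod d) : gw d ^ (x.val * y.val) = e d (x * y) := by
  rw [e, ZMod.val_mul, gw_pow_mod]

lemma abs_gw : ‖gw d‖ = 1 := by
  have h : (2 * (Real.pi : ℂ) * Complex.I / d) = ((2 * Real.pi / d : ℝ) : ℂ) * Complex.I := by
    push_cast; ring
  rw [gw, h, Complex.norm_exp, Complex.mul_I_re, Complex.ofReal_im, neg_zero, Real.exp_zero]

lemma abs_e (x : ZMod d) : ‖e d x‖ = 1 := by
  rw [e, norm_pow, abs_gw, one_pow]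

lemma e_ne_zero (x : ZMod d) : e d x ≠ 0 := by
  intro h
  have := abs_e d x
  rw [h] at this; simp at this

lemma e_conj (x : ZMod d) : (starRingEnd ℂ) (e d x) = e d (-x) := by
  have h1 : e d x * e d (-x) = 1 := by rw [← e_add]; simp [e_zero]
  have h2 : e d x * (starRingEnd ℂ) (e d x) = 1 := by
    rw [Complex.mul_conj, ← Complex.sq_norm, abs_e]; norm_num
  exact mul_left_cancel₀ (e_ne_zero d x) (h2.trans h1.symm)

lemma e_eq_one_iff (x : ZMod d) : e d x = 1 ↔ x = 0 := by
  rw [e, (gw_prim d).pow_eq_one_iff_dvd]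
  constructor
  · intro h
    exact (ZMod.val_eq_zero x).mp (Nat.eq_zero_of_dvd_of_lt h x.val_lt)
  · rintro rfl; simp

lemma e_sum (x : ZMod d) : ∑ m : ZMod d, e d (m * x) = if x = 0 then (d : ℂ) else 0 := by
  by_cases hx : x = 0
  · simp [hx, e_zero, Finset.card_univ]
  · rw [if_neg hx]
    have hz : e d x ≠ 1 := fun h => hx ((e_eq_one_iff d x).mp h)
    have key : ∀ m : ZMod d, e d (m * x) = (e d x) ^ m.val := by
      intro m
      rw [e, e, ← pow_mul, ZMod.val_mul, gw_pow_mod, mul_comm]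
    simp_rw [key]
    rw [Finset.sum_nbij' (i := fun m : ZMod d => m.val) (j := fun i : ℕ => (i : ZMod d))
      (t := Finset.range d) (g := fun i => (e d x) ^ i)
      (fun a _ => Finset.mem_range.mpr a.val_lt) (fun a _ => Finset.mem_univ _)
      (fun a _ => by simp [ZMod.natCast_val]) (fun a ha => ZMod.val_cast_of_lt (Finset.mem_range.mp ha))
      (fun a _ => rfl)]
    rw [geom_sum_eq hz]
    have : e d x ^ d = 1 := by rw [e, ← pow_mul, mul_comm, pow_mul, gw_pow_d, one_pow]
    rw [this, sub_self, zero_div]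

variable (g : ZMod d → ℂ)

/-- vectorized rank-one projections -/
def Vm : Matrix (ZMod d × ZMod d) (ZMod d × ZMod d) ℂ :=
  fun p q => modT d p.1 p.2 g q.1 * (starRingEnd ℂ) (modT d p.1 p.2 g q.2)

lemma Gmat_eq_mul : Gmat d g = Vm d g * (Vm d g)ᴴ := by
  ext p q
  rw [Gmat, Matrix.mul_apply]
  have h1 : ∀ z : ℂ, ((‖z‖ ^ 2 : ℝ) : ℂ) = z * (starRingEnd ℂ) z := by
    intro z; rw [Complex.sq_norm, Complex.mul_conj]
  rw [h1, inn, map_sum, Finset.sum_mul_sum, Fintype.sum_prod_type]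
  refine Finset.sum_congr rfl fun m _ => Finset.sum_congr rfl fun n _ => ?_
  simp only [Vm, Matrix.conjTranspose_apply, RCLike.star_def, _root_.map_mul, Complex.conj_conj]
  ring

def Amb (w : ZMod d × ZMod d) : ℂ :=
  ∑ j : ZMod d, e d (w.1 * j) * g j * (starRingEnd ℂ) (g (j - w.2))

def Cm : Matrix (ZMod d × ZMod d) (ZMod d × ZMod d) ℂ :=
  fun w p => (starRingEnd ℂ) (e d (p.1 * w.2 + p.2 * w.1))

lemma W_apply (w q : ZMod d × ZMod d) :
    (Cm d * Vm d g) w q =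
      if q.2 = q.1 - w.2 then (d : ℂ) * (e d (-(q.1 * w.1)) * Amb d g w) else 0 := by
  obtain ⟨a, b⟩ := w
  obtain ⟨m, n⟩ := q
  rw [Matrix.mul_apply, Fintype.sum_prod_type]
  have hsummand : ∀ k l : ZMod d,
      Cm d (a, b) (k, l) * Vm d g (k, l) (m, n) =
      e d (k * (m - n - b)) * (e d (-(l * a)) * (g (m - l) * (starRingEnd ℂ) (g (n - l)))) := by
    intro k l
    have expand : Cm d (a, b) (k, l) * Vm d g (k, l) (m, n) =
        e d (-(k * b + l * a)) * e d (k * m) * e d (-(k * n)) *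
          (g (m - l) * (starRingEnd ℂ) (g (n - l))) := by
      simp only [Cm, Vm, modT, e_mul_val, _root_.map_mul, e_conj]
      ring
    rw [expand, ← e_add, ← e_add,
      show -(k * b + l * a) + k * m + -(k * n) = k * (m - n - b) + -(l * a) from by ring,
      e_add]
    ring
  simp_rw [hsummand]
  rw [← Finset.sum_mul_sum, e_sum]
  by_cases h : n = m - b
  · have h0 : m - n - b = 0 := by rw [h]; ring
    rw [if_pos h0, if_pos h]
    congr 1
    subst h
    rw [Amb, Finset.mul_sum]
    rw [Fintype.sum_equiv (Equiv.subLeft m)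
      (fun l => e d (-(l * a)) * (g (m - l) * (starRingEnd ℂ) (g (m - b - l))))
      (fun j => e d (-(m * a)) * (e d (a * j) * g j * (starRingEnd ℂ) (g (j - b))))]
    intro l
    simp only [Equiv.subLeft_apply]
    have h2 : m - b - l = m - l - b := by ring
    rw [h2, show (-(l * a)) = -(m * a) + a * (m - l) from by ring, e_add]
    ring
  · have h0 : ¬(m - n - b = 0) := by
      intro hc
      apply h
      have h3 : m - b - n = 0 := by rw [← hc]; ring
      exact (sub_eq_zero.mp h3).symm
    rw [if_neg h0, if_neg h, zero_mul]

lemma WWH : (Cm d * Vm d g) * (Cm d * Vm d g)ᴴ =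
    Matrix.diagonal (fun w => (d : ℂ) ^ 3 * (Amb d g w * (starRingEnd ℂ) (Amb d g w))) := by
  ext w w'
  obtain ⟨a, b⟩ := w
  obtain ⟨a', b'⟩ := w'
  rw [Matrix.mul_apply]
  simp_rw [Matrix.conjTranspose_apply, RCLike.star_def, W_apply, apply_ite (starRingEnd ℂ),
    map_zero, _root_.map_mul, map_natCast, e_conj, neg_neg]
  rw [Fintype.sum_prod_type]
  simp_rw [ite_mul, zero_mul, mul_ite, mul_zero, Finset.sum_ite_eq' Finset.univ, Finset.mem_univ,
    if_true]
  -- now summing over m : if (m - b = m - b') then ... else 0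
  by_cases hb : b = b'
  · subst hb
    simp only [eq_self_iff_true, if_true]
    have hterm : ∀ m : ZMod d,
        (d : ℂ) * (e d (-(m * a)) * Amb d g (a, b)) * ((d : ℂ) * (e d (m * a') * (starRingEnd ℂ) (Amb d g (a', b)))) =
        ((d : ℂ) * Amb d g (a, b) * ((d : ℂ) * (starRingEnd ℂ) (Amb d g (a', b)))) * e d (m * (a' - a)) := by
      intro m
      rw [show m * (a' - a) = -(m * a) + m * a' from by ring, e_add]
      ring
    simp_rw [hterm]
    rw [← Finset.mul_sum, e_sum]
    by_cases ha : a' - a = 0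
    · have ha' : a' = a := by rwa [sub_eq_zero] at ha
      subst ha'
      rw [if_pos ha, Matrix.diagonal_apply_eq]
      push_cast
      ring
    · have ha' : (a, b) ≠ (a', b) := by
        intro hc
        apply ha
        rw [(Prod.mk.injEq _ _ _ _).mp hc |>.1, sub_self]
      rw [if_neg ha, mul_zero, Matrix.diagonal_apply_ne _ ha']
  · have hcond : ∀ m : ZMod d, ¬(m - b = m - b') := by
      intro m hc
      exact hb (by rwa [sub_right_inj] at hc)
    simp only [hcond, if_false]
    rw [Finset.sum_const, smul_zero, Matrix.diagonal_apply_ne]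
    intro hc
    exact hb ((Prod.mk.injEq _ _ _ _).mp hc).2

lemma moyal (hg : ∑ n : ZMod d, ‖g n‖ ^ 2 = 1) :
    ∑ w : ZMod d × ZMod d, Amb d g w * (starRingEnd ℂ) (Amb d g w) = (d : ℂ) := by
  have hg1 : ∑ n : ZMod d, g n * (starRingEnd ℂ) (g n) = 1 := by
    have h : ∀ n : ZMod d, g n * (starRingEnd ℂ) (g n) = ((‖g n‖ ^ 2 : ℝ) : ℂ) := by
      intro n; rw [Complex.sq_norm, Complex.mul_conj]
    simp_rw [h]
    rw [← Complex.ofReal_sum, hg, Complex.ofReal_one]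
  have hshift : ∀ j : ZMod d, ∑ b : ZMod d, g (j - b) * (starRingEnd ℂ) (g (j - b)) = 1 := by
    intro j
    rw [Fintype.sum_equiv (Equiv.subLeft j) _ (fun c => g c * (starRingEnd ℂ) (g c))
      (fun b => by simp only [Equiv.subLeft_apply]), hg1]
  rw [Fintype.sum_prod_type, Finset.sum_comm]
  have inner : ∀ b : ZMod d,
      (∑ a : ZMod d, Amb d g (a, b) * (starRingEnd ℂ) (Amb d g (a, b))) =
      (d : ℂ) * ∑ j : ZMod d, (g j * (starRingEnd ℂ) (g j)) *
        (g (j - b) * (starRingEnd ℂ) (g (j - b))) := by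
    intro b
    have expand : ∀ a : ZMod d, Amb d g (a, b) * (starRingEnd ℂ) (Amb d g (a, b)) =
        ∑ j : ZMod d, ∑ j' : ZMod d, e d (a * (j - j')) *
          ((g j * (starRingEnd ℂ) (g j')) * ((starRingEnd ℂ) (g (j - b)) * g (j' - b))) := by
      intro a
      rw [Amb, map_sum, Finset.sum_mul_sum]
      refine Finset.sum_congr rfl fun j _ => Finset.sum_congr rfl fun j' _ => ?_
      simp only [_root_.map_mul, Complex.conj_conj, e_conj]
      rw [show a * (j - j') = a * j + -(a * j') from by ring, e_add]
      ring
    simp_rw [expand]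
    rw [Finset.sum_comm, Finset.mul_sum]
    refine Finset.sum_congr rfl fun j _ => ?_
    rw [Finset.sum_comm]
    have h1 : ∀ j' : ZMod d, (∑ a : ZMod d, e d (a * (j - j')) *
        ((g j * (starRingEnd ℂ) (g j')) * ((starRingEnd ℂ) (g (j - b)) * g (j' - b)))) =
        (if j - j' = 0 then (d : ℂ) else 0) *
          ((g j * (starRingEnd ℂ) (g j')) * ((starRingEnd ℂ) (g (j - b)) * g (j' - b))) := by
      intro j'
      rw [← Finset.sum_mul, e_sum]
    simp_rw [h1, sub_eq_zero, ite_mul, zero_mul, Finset.sum_ite_eq, Finset.mem_univ, if_true]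
    ring
  simp_rw [inner]
  rw [← Finset.mul_sum, Finset.sum_comm]
  simp_rw [← Finset.mul_sum, hshift, mul_one]
  rw [hg1, mul_one]

lemma amb_sq_le (hg : ∑ n : ZMod d, ‖g n‖ ^ 2 = 1) (w : ZMod d × ZMod d) :
    ‖Amb d g w‖ ^ 2 ≤ 1 := by
  have hshift : ∑ j : ZMod d, ‖g (j - w.2)‖ ^ 2 = 1 := by
    rw [Fintype.sum_equiv (Equiv.subRight w.2) _ (fun c => ‖g c‖ ^ 2)
      (fun j => by simp only [Equiv.subRight_apply]), hg]
  have h1 : ‖Amb d g w‖ ≤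
      ∑ j : ZMod d, ‖g j‖ * ‖g (j - w.2)‖ := by
    refine le_trans (norm_sum_le _ _) (le_of_eq ?_)
    refine Finset.sum_congr rfl fun j _ => ?_
    rw [norm_mul, norm_mul, abs_e, one_mul, Complex.norm_conj]
  have h2 : ‖Amb d g w‖ ^ 2 ≤
      (∑ j : ZMod d, ‖g j‖ * ‖g (j - w.2)‖) ^ 2 := by
    exact pow_le_pow_left₀ (norm_nonneg _) h1 2
  refine h2.trans ?_
  calc (∑ j : ZMod d, ‖g j‖ * ‖g (j - w.2)‖) ^ 2
      ≤ (∑ j : ZMod d, ‖g j‖ ^ 2) * ∑ j : ZMod d, ‖g (j - w.2)‖ ^ 2 :=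
        Finset.sum_mul_sq_le_sq_mul_sq _ _ _
    _ = 1 := by rw [hg, hshift, mul_one]

lemma card_ge (hg : ∑ n : ZMod d, ‖g n‖ ^ 2 = 1) :
    d ≤ Fintype.card {w : ZMod d × ZMod d // Amb d g w ≠ 0} := by
  classical
  have hsum : ∑ w : ZMod d × ZMod d, ‖Amb d g w‖ ^ 2 = (d : ℝ) := by
    have h := moyal d g hg
    have h2 : ∀ w : ZMod d × ZMod d, Amb d g w * (starRingEnd ℂ) (Amb d g w) =
        ((‖Amb d g w‖ ^ 2 : ℝ) : ℂ) := by
      intro w; rw [Complex.sq_norm, Complex.mul_conj]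
    simp_rw [h2] at h
    rw [← Complex.ofReal_sum] at h
    exact_mod_cast h
  rw [Fintype.card_subtype]
  have hd : (d : ℝ) ≤ ((Finset.univ.filter fun w : ZMod d × ZMod d => Amb d g w ≠ 0).card : ℝ) := by
    calc (d : ℝ) = ∑ w : ZMod d × ZMod d, ‖Amb d g w‖ ^ 2 := hsum.symm
      _ = ∑ w ∈ Finset.univ.filter fun w : ZMod d × ZMod d => Amb d g w ≠ 0,
            ‖Amb d g w‖ ^ 2 := by
          refine (Finset.sum_filter_of_ne fun w _ hw => ?_).symm
          intro hc
          rw [hc] at hw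
          simp at hw
      _ ≤ ∑ _w ∈ Finset.univ.filter fun w : ZMod d × ZMod d => Amb d g w ≠ 0, (1 : ℝ) :=
          Finset.sum_le_sum fun w _ => amb_sq_le d g hg w
      _ = _ := by rw [Finset.sum_const, nsmul_eq_mul, mul_one]
  exact_mod_cast hd

end S5

open Matrix
open scoped ComplexOrder

/-- `rank G(g) ≥ d` for every unit vector `g ∈ ℂ^d`. -/
theorem stmt5 (d : ℕ) [NeZero d] (hd : 1 ≤ d) (g : ZMod d → ℂ)
    (hg : ∑ n : ZMod d, ‖g n‖ ^ 2 = 1) :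
    d ≤ (Gmat d g).rank := by
  classical
  have h1 : (Gmat d g).rank = (S5.Vm d g).rank := by
    rw [S5.Gmat_eq_mul d g]
    exact Matrix.rank_self_mul_conjTranspose _
  have h2 : (S5.Cm d * S5.Vm d g).rank ≤ (S5.Vm d g).rank := Matrix.rank_mul_le_right _ _
  have h3 : ((S5.Cm d * S5.Vm d g) * (S5.Cm d * S5.Vm d g)ᴴ).rank ≤ (S5.Cm d * S5.Vm d g).rank :=
    Matrix.rank_mul_le_left _ _
  have h4 : ((S5.Cm d * S5.Vm d g) * (S5.Cm d * S5.Vm d g)ᴴ).rank =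
      Fintype.card {w : ZMod d × ZMod d //
        (d : ℂ) ^ 3 * (S5.Amb d g w * (starRingEnd ℂ) (S5.Amb d g w)) ≠ 0} := by
    rw [S5.WWH d g]
    exact Matrix.rank_diagonal _
  have h5 : Fintype.card {w : ZMod d × ZMod d //
      (d : ℂ) ^ 3 * (S5.Amb d g w * (starRingEnd ℂ) (S5.Amb d g w)) ≠ 0} =
      Fintype.card {w : ZMod d × ZMod d // S5.Amb d g w ≠ 0} := by
    refine Fintype.card_congr (Equiv.subtypeEquivRight fun w => ?_)
    have hd3 : ((d : ℂ) ^ 3) ≠ 0 := by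
      simp [NeZero.ne d]
    constructor
    · intro h hc
      rw [hc] at h
      simp at h
    · intro h
      refine mul_ne_zero hd3 (mul_ne_zero h ?_)
      simpa using h
  have h6 := S5.card_ge d g hg
  omega
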